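/- Let T and L be positive natural numbers and let h : (ℤ/Tℤ) × (ℤ/Lℤ) → ℝ. Define the discrete Fourier transform ĥ(ν, k) := (1/√(LT)) Σ_{t=0}^{T−1} Σ_{j=0}^{L−1} exp( 2πi·kj/L + 2πi·νt/T ) · h(t, j). Then Σ_{t=0}^{T−1} Σ_{j=0}^{L−1} ( h(t, j) − (1/2)·h(t−1, j−1) − (1/2)·h(t−1, j+1) )² = Σ_{ν=0}^{T−1} Σ_{k=0}^{L−1} |ĥ(ν, k)|² · ( 1 − 2·cos(2πν/T)·cos(2πk/L) + cos²(2πk/L) ). -/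

import Mathlib

open Real Complex Finset

noncomputable def ee (N : ℕ) (x : ZMod N) : ℂ :=
  Complex.exp (2 * π * Complex.I * x.val / N)

lemma ee_natCast (N : ℕ) (hN : 0 < N) (n : ℕ) :
    Complex.exp (2 * π * Complex.I * n / N) = ee N (n : ZMod N) := by
  haveI : NeZero N := ⟨hN.ne'⟩
  have hval : ((n : ZMod N)).val = n % N := ZMod.val_natCast N n
  rw [ee, hval]
  have h1 : (n : ℂ) = (n % N : ℕ) + (N : ℂ) * (n / N : ℕ) := by
    conv_lhs => rw [← Nat.mod_add_div n N]
    push_cast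
    ring
  rw [h1]
  have hNne : (N : ℂ) ≠ 0 := Nat.cast_ne_zero.2 hN.ne'
  rw [show 2 * ↑π * Complex.I * ((↑(n % N) : ℂ) + ↑N * ↑(n / N)) / ↑N
      = 2 * ↑π * Complex.I * ↑(n % N) / ↑N + (n / N : ℕ) * (2 * ↑π * Complex.I) by
    field_simp]
  rw [Complex.exp_add, Complex.exp_nat_mul, Complex.exp_two_pi_mul_I, one_pow, mul_one]

lemma ee_add (N : ℕ) (hN : 0 < N) (a b : ZMod N) :
    ee N (a + b) = ee N a * ee N b := by
  haveI : NeZero N := ⟨hN.ne'⟩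
  have key : ((a.val + b.val : ℕ) : ZMod N) = a + b := by
    push_cast
    rw [ZMod.natCast_val, ZMod.natCast_val, ZMod.cast_id, ZMod.cast_id]
  rw [← key, ← ee_natCast N hN, ee, ee, ← Complex.exp_add]
  congr 1
  push_cast
  ring

lemma ee_zero (N : ℕ) : ee N 0 = 1 := by
  simp [ee]

lemma conj_ee (N : ℕ) (hN : 0 < N) (a : ZMod N) :
    (starRingEnd ℂ) (ee N a) = ee N (-a) := by
  have h1 : ee N a * ee N (-a) = 1 := by rw [← ee_add N hN]; simp [ee_zero]
  have h2 : ee N a * (starRingEnd ℂ) (ee N a) = 1 := by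
    rw [ee, ← Complex.exp_conj, ← Complex.exp_add]
    rw [show (starRingEnd ℂ) (2 * ↑π * Complex.I * ↑(ZMod.val a) / ↑N)
        = -(2 * ↑π * Complex.I * ↑(ZMod.val a) / ↑N) by
      rw [map_div₀]
      simp [Complex.conj_I, Complex.conj_ofReal, map_ofNat]
      ring]
    simp
  exact (mul_left_cancel₀ (Complex.exp_ne_zero _) (h2.trans h1.symm))

lemma ee_nsmul (N : ℕ) (hN : 0 < N) (m : ℕ) (a : ZMod N) :
    ee N ((m : ZMod N) * a) = ee N a ^ m := by
  induction m with
  | zero => simp [ee_zero]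
  | succ m ih =>
    push_cast
    rw [add_mul, one_mul, ee_add N hN, ih, pow_succ]

lemma ee_eq_one_iff (N : ℕ) (hN : 0 < N) (a : ZMod N) : ee N a = 1 ↔ a = 0 := by
  haveI : NeZero N := ⟨hN.ne'⟩
  constructor
  · intro hone
    rw [ee, Complex.exp_eq_one_iff] at hone
    obtain ⟨n, hn⟩ := hone
    have hNne : (N : ℂ) ≠ 0 := Nat.cast_ne_zero.2 hN.ne'
    have h2pi : (2 * (π : ℂ) * Complex.I) ≠ 0 := by
      simp [Real.pi_ne_zero, Complex.I_ne_zero, Complex.ofReal_ne_zero]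
    have hval : (a.val : ℂ) = (n : ℂ) * N := by
      have h4 : (2 * π * Complex.I * a.val / N) * N = (n * (2 * π * Complex.I)) * N := by
        rw [hn]
      rw [div_mul_cancel₀ _ hNne] at h4
      apply mul_left_cancel₀ h2pi
      linear_combination h4
    have hvalZ : (a.val : ℤ) = n * N := by exact_mod_cast hval
    have hNZ : (0 : ℤ) < (N : ℤ) := by exact_mod_cast hN
    have hltZ : (a.val : ℤ) < N := by exact_mod_cast ZMod.val_lt a
    have hge : (0 : ℤ) ≤ (a.val : ℤ) := Int.natCast_nonneg _
    have hn0 : n = 0 := by nlinarith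
    have : a.val = 0 := by
      have : (a.val : ℤ) = 0 := by rw [hvalZ, hn0]; ring
      exact_mod_cast this
    exact (ZMod.val_eq_zero a).mp this
  · rintro rfl; exact ee_zero N

lemma sum_range_zmod (N : ℕ) [NeZero N] {M : Type*} [AddCommMonoid M] (f : ZMod N → M) :
    ∑ n ∈ Finset.range N, f (n : ZMod N) = ∑ x : ZMod N, f x := by
  apply Finset.sum_nbij' (i := fun (n : ℕ) => (n : ZMod N)) (j := fun (x : ZMod N) => x.val)
  · intro a _; exact Finset.mem_univ _
  · intro x _; exact Finset.mem_range.2 (ZMod.val_lt x)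
  · intro a ha; exact ZMod.val_natCast_of_lt (Finset.mem_range.1 ha)
  · intro x _; exact ZMod.natCast_rightInverse x
  · intro a _; rfl

lemma ee_orth (N : ℕ) [NeZero N] (hN : 0 < N) (c : ZMod N) :
    ∑ x : ZMod N, ee N (x * c) = if c = 0 then (N : ℂ) else 0 := by
  split_ifs with hc
  · subst hc
    simp [ee_zero, ZMod.card]
  · have hζ : ee N c ≠ 1 := fun hone => hc ((ee_eq_one_iff N hN c).1 hone)
    rw [← sum_range_zmod N (fun x => ee N (x * c)),
      Finset.sum_congr rfl (fun n _ => ee_nsmul N hN n c), geom_sum_eq hζ]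
    have hpow : ee N c ^ N = 1 := by
      rw [← ee_nsmul N hN, ZMod.natCast_self, zero_mul, ee_zero]
    rw [hpow]
    simp

lemma ee_orth' (N : ℕ) [NeZero N] (hN : 0 < N) (a b : ZMod N) :
    ∑ x : ZMod N, ee N (x * a) * (starRingEnd ℂ) (ee N (x * b))
      = if a = b then (N : ℂ) else 0 := by
  have : ∀ x : ZMod N, ee N (x * a) * (starRingEnd ℂ) (ee N (x * b)) = ee N (x * (a - b)) := by
    intro x
    rw [conj_ee N hN, ← ee_add N hN]
    congr 1
    ring
  rw [Finset.sum_congr rfl (fun x _ => this x), ee_orth N hN]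
  simp [sub_eq_zero]

lemma parseval_aux {ι : Type*} [Fintype ι] [DecidableEq ι] (c : ι → ι → ℂ) (n : ℂ)
    (horth : ∀ p q, ∑ w : ι, c w p * (starRingEnd ℂ) (c w q) = if p = q then n else 0)
    (f : ι → ℝ) :
    ∑ w : ι, (∑ p : ι, c w p * (f p : ℂ)) * (starRingEnd ℂ) (∑ p : ι, c w p * (f p : ℂ))
      = n * ∑ p : ι, (f p : ℂ) ^ 2 := by
  have expand : ∀ w, (∑ p : ι, c w p * (f p : ℂ)) *
        (starRingEnd ℂ) (∑ q : ι, c w q * (f q : ℂ))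
      = ∑ p : ι, ∑ q : ι, (c w p * (starRingEnd ℂ) (c w q)) * ((f p : ℂ) * (f q : ℂ)) := by
    intro w
    rw [map_sum, Finset.sum_mul_sum]
    refine Finset.sum_congr rfl fun p _ => Finset.sum_congr rfl fun q _ => ?_
    rw [map_mul, Complex.conj_ofReal]
    ring
  calc ∑ w : ι, (∑ p : ι, c w p * (f p : ℂ)) * (starRingEnd ℂ) (∑ p : ι, c w p * (f p : ℂ))
      = ∑ w : ι, ∑ p : ι, ∑ q : ι,
          (c w p * (starRingEnd ℂ) (c w q)) * ((f p : ℂ) * (f q : ℂ)) := by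
        exact Finset.sum_congr rfl fun w _ => expand w
    _ = ∑ p : ι, ∑ q : ι, (∑ w : ι, c w p * (starRingEnd ℂ) (c w q)) * ((f p : ℂ) * (f q : ℂ)) := by
        rw [Finset.sum_comm]
        refine Finset.sum_congr rfl fun p _ => ?_
        rw [Finset.sum_comm]
        refine Finset.sum_congr rfl fun q _ => ?_
        rw [Finset.sum_mul]
    _ = ∑ p : ι, ∑ q : ι, (if p = q then n else 0) * ((f p : ℂ) * (f q : ℂ)) := by
        simp_rw [horth]
    _ = n * ∑ p : ι, (f p : ℂ) ^ 2 := by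
        rw [Finset.mul_sum]
        refine Finset.sum_congr rfl fun p _ => ?_
        simp_rw [ite_mul, zero_mul]
        rw [Finset.sum_ite_eq]
        simp [sq]

lemma ee_as_exp_mul_I (N : ℕ) (x : ZMod N) :
    ee N x = Complex.exp ((2 * π * x.val / N : ℝ) * Complex.I) := by
  rw [ee]
  congr 1
  push_cast
  ring

lemma norm_factor_aux (N M : ℕ) (hN : 0 < N) (hM : 0 < M) (a : ZMod N) (b : ZMod M) :
    ‖1 - ee N a * ((ee M b + ee M (-b)) / 2)‖ ^ 2
      = 1 - 2 * Real.cos (2 * π * a.val / N) * Real.cos (2 * π * b.val / M) +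
          Real.cos (2 * π * b.val / M) ^ 2 := by
  have hcos : (ee M b + ee M (-b)) / 2 = ((Real.cos (2 * π * b.val / M) : ℝ) : ℂ) := by
    rw [← conj_ee M hM, Complex.add_conj, ee_as_exp_mul_I, Complex.exp_ofReal_mul_I_re]
    push_cast
    ring
  rw [hcos, ee_as_exp_mul_I]
  rw [Complex.sq_norm, Complex.normSq_apply]
  set θ : ℝ := 2 * π * a.val / N
  set φ : ℝ := 2 * π * b.val / M
  have hre : (1 - Complex.exp ((θ : ℝ) * Complex.I) * ((Real.cos φ : ℝ) : ℂ)).re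
      = 1 - Real.cos θ * Real.cos φ := by
    simp [Complex.sub_re, Complex.mul_re, Complex.exp_ofReal_mul_I_re,
      Complex.exp_ofReal_mul_I_im, Complex.ofReal_re, Complex.ofReal_im,
      Complex.cos_ofReal_re]
  have him : (1 - Complex.exp ((θ : ℝ) * Complex.I) * ((Real.cos φ : ℝ) : ℂ)).im
      = -(Real.sin θ * Real.cos φ) := by
    simp [Complex.sub_im, Complex.mul_im, Complex.exp_ofReal_mul_I_re,
      Complex.exp_ofReal_mul_I_im, Complex.ofReal_re, Complex.ofReal_im,
      Complex.cos_ofReal_re]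
  rw [hre, him]
  have hpyth := Real.sin_sq_add_cos_sq θ
  nlinarith [hpyth]

theorem stmt_19 (T L : ℕ) (hT : 0 < T) (hL : 0 < L) (h : ZMod T × ZMod L → ℝ) :
    ∑ t ∈ Finset.range T, ∑ j ∈ Finset.range L,
        (h ((t : ZMod T), (j : ZMod L)) -
          (1 / 2) * h ((t : ZMod T) - 1, (j : ZMod L) - 1) -
          (1 / 2) * h ((t : ZMod T) - 1, (j : ZMod L) + 1)) ^ 2
    = ∑ ν ∈ Finset.range T, ∑ k ∈ Finset.range L,
        ‖(1 / (Real.sqrt (L * T) : ℂ)) *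
            ∑ t ∈ Finset.range T, ∑ j ∈ Finset.range L,
              Complex.exp (2 * π * Complex.I * k * j / L + 2 * π * Complex.I * ν * t / T) *
                (h ((t : ZMod T), (j : ZMod L)) : ℂ)‖ ^ 2 *
          (1 - 2 * Real.cos (2 * π * ν / T) * Real.cos (2 * π * k / L) +
            Real.cos (2 * π * k / L) ^ 2) := by
  haveI : NeZero T := ⟨hT.ne'⟩
  haveI : NeZero L := ⟨hL.ne'⟩
  set g : ZMod T × ZMod L → ℝ := fun p =>
    h p - (1 / 2) * h (p.1 - 1, p.2 - 1) - (1 / 2) * h (p.1 - 1, p.2 + 1) with hg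
  set c : (ZMod T × ZMod L) → (ZMod T × ZMod L) → ℂ := fun w p =>
    ee T (w.1 * p.1) * ee L (w.2 * p.2) with hc
  set F : (ZMod T × ZMod L) → ℂ := fun w => ∑ p : ZMod T × ZMod L, c w p * (h p : ℂ) with hF
  set G : (ZMod T × ZMod L) → ℂ := fun w => ∑ p : ZMod T × ZMod L, c w p * (g p : ℂ) with hG
  -- orthogonality
  have horth : ∀ p q : ZMod T × ZMod L,
      ∑ w : ZMod T × ZMod L, c w p * (starRingEnd ℂ) (c w q)
        = if p = q then ((T : ℂ) * L) else 0 := by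
    intro p q
    rw [Fintype.sum_prod_type]
    have : ∀ (x : ZMod T) (y : ZMod L),
        c (x, y) p * (starRingEnd ℂ) (c (x, y) q)
          = (ee T (x * p.1) * (starRingEnd ℂ) (ee T (x * q.1))) *
            (ee L (y * p.2) * (starRingEnd ℂ) (ee L (y * q.2))) := by
      intro x y
      simp only [hc, map_mul]
      ring
    simp_rw [this]
    rw [← Finset.sum_mul_sum, ee_orth' T hT, ee_orth' L hL]
    by_cases h1 : p.1 = q.1 <;> by_cases h2 : p.2 = q.2 <;>
      simp [h1, h2, Prod.ext_iff]
  -- shift identity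
  have hshift : ∀ w : ZMod T × ZMod L,
      G w = (1 - ee T w.1 * ((ee L w.2 + ee L (-w.2)) / 2)) * F w := by
    intro w
    have e1 : ∑ p : ZMod T × ZMod L, c w p * ((h (p.1 - 1, p.2 - 1) : ℝ) : ℂ)
        = ee T w.1 * ee L w.2 * F w := by
      rw [← Equiv.sum_comp
        (Equiv.prodCongr (Equiv.addRight (1 : ZMod T)) (Equiv.addRight (1 : ZMod L)))
        (fun p : ZMod T × ZMod L => c w p * ((h (p.1 - 1, p.2 - 1) : ℝ) : ℂ)), hF,
        Finset.mul_sum]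
      refine Finset.sum_congr rfl fun q _ => ?_
      simp only [Equiv.prodCongr_apply, Equiv.coe_addRight, Prod.map, hc]
      rw [add_sub_cancel_right, add_sub_cancel_right, mul_add, mul_add, mul_one, mul_one,
        ee_add T hT, ee_add L hL]
      ring
    have e2 : ∑ p : ZMod T × ZMod L, c w p * ((h (p.1 - 1, p.2 + 1) : ℝ) : ℂ)
        = ee T w.1 * ee L (-w.2) * F w := by
      rw [← Equiv.sum_comp
        (Equiv.prodCongr (Equiv.addRight (1 : ZMod T)) (Equiv.addRight (-1 : ZMod L)))
        (fun p : ZMod T × ZMod L => c w p * ((h (p.1 - 1, p.2 + 1) : ℝ) : ℂ)), hF,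
        Finset.mul_sum]
      refine Finset.sum_congr rfl fun q _ => ?_
      simp only [Equiv.prodCongr_apply, Equiv.coe_addRight, Prod.map, hc]
      rw [add_sub_cancel_right, show q.2 + -1 + 1 = q.2 by ring, mul_add, mul_add, mul_one,
        ee_add T hT, ee_add L hL]
      rw [show w.2 * -1 = -w.2 by ring]
      ring
    have split : G w = F w - (1 / 2) * (∑ p : ZMod T × ZMod L,
          c w p * ((h (p.1 - 1, p.2 - 1) : ℝ) : ℂ))
        - (1 / 2) * (∑ p : ZMod T × ZMod L, c w p * ((h (p.1 - 1, p.2 + 1) : ℝ) : ℂ)) := by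
      rw [hG, hF, Finset.mul_sum, Finset.mul_sum, ← Finset.sum_sub_distrib,
        ← Finset.sum_sub_distrib]
      refine Finset.sum_congr rfl fun p _ => ?_
      simp only [hg]
      push_cast
      ring
    rw [split, e1, e2]
    ring
  -- Parseval
  have hpars : ∑ w : ZMod T × ZMod L, G w * (starRingEnd ℂ) (G w)
      = ((T : ℂ) * L) * ∑ p : ZMod T × ZMod L, (g p : ℂ) ^ 2 :=
    parseval_aux c _ horth g
  -- sum of squared norms of G
  have hGsum : ∑ w : ZMod T × ZMod L, ‖G w‖ ^ 2
      = (T : ℝ) * L * ∑ p : ZMod T × ZMod L, g p ^ 2 := by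
    have lhsC : ∑ w : ZMod T × ZMod L, G w * (starRingEnd ℂ) (G w)
        = ((∑ w : ZMod T × ZMod L, ‖G w‖ ^ 2 : ℝ) : ℂ) := by
      push_cast
      refine Finset.sum_congr rfl fun w _ => ?_
      rw [Complex.mul_conj, Complex.normSq_eq_norm_sq]
      push_cast
      ring
    have rhsC : ((T : ℂ) * L) * ∑ p : ZMod T × ZMod L, (g p : ℂ) ^ 2
        = (((T : ℝ) * L * ∑ p : ZMod T × ZMod L, g p ^ 2 : ℝ) : ℂ) := by
      push_cast
      ring
    exact_mod_cast lhsC.symm.trans (hpars.trans rhsC)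
  -- identify LHS with sum of g squared
  have hLHS : ∑ t ∈ Finset.range T, ∑ j ∈ Finset.range L,
        (h ((t : ZMod T), (j : ZMod L)) -
          (1 / 2) * h ((t : ZMod T) - 1, (j : ZMod L) - 1) -
          (1 / 2) * h ((t : ZMod T) - 1, (j : ZMod L) + 1)) ^ 2
      = ∑ p : ZMod T × ZMod L, g p ^ 2 := by
    rw [Fintype.sum_prod_type,
      ← sum_range_zmod T (fun x => ∑ y : ZMod L, g (x, y) ^ 2)]
    refine Finset.sum_congr rfl fun t _ => ?_
    rw [← sum_range_zmod L (fun y => g ((t : ZMod T), y) ^ 2)]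
  -- identify inner double sum with F
  have hinner : ∀ ν ∈ Finset.range T, ∀ k ∈ Finset.range L,
      (∑ t ∈ Finset.range T, ∑ j ∈ Finset.range L,
        Complex.exp (2 * π * Complex.I * k * j / L + 2 * π * Complex.I * ν * t / T) *
          (h ((t : ZMod T), (j : ZMod L)) : ℂ))
      = F ((ν : ZMod T), (k : ZMod L)) := by
    intro ν _ k _
    simp only [hF]
    rw [Fintype.sum_prod_type,
      ← sum_range_zmod T (fun x => ∑ y : ZMod L,
        c ((ν : ZMod T), (k : ZMod L)) (x, y) * (h (x, y) : ℂ))]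
    refine Finset.sum_congr rfl fun t _ => ?_
    rw [← sum_range_zmod L (fun y =>
      c ((ν : ZMod T), (k : ZMod L)) ((t : ZMod T), y) * (h ((t : ZMod T), y) : ℂ))]
    refine Finset.sum_congr rfl fun j _ => ?_
    rw [Complex.exp_add]
    simp only [hc]
    congr 1
    rw [show 2 * ↑π * Complex.I * (k : ℂ) * (j : ℂ) / (L : ℂ)
        = 2 * ↑π * Complex.I * ((k * j : ℕ) : ℂ) / (L : ℂ) by push_cast; ring,
      show 2 * ↑π * Complex.I * (ν : ℂ) * (t : ℂ) / (T : ℂ)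
        = 2 * ↑π * Complex.I * ((ν * t : ℕ) : ℂ) / (T : ℂ) by push_cast; ring,
      ee_natCast L hL, ee_natCast T hT]
    push_cast
    ring
  -- identify the gamma factor
  have hgamma : ∀ ν ∈ Finset.range T, ∀ k ∈ Finset.range L,
      (1 - 2 * Real.cos (2 * π * ν / T) * Real.cos (2 * π * k / L) +
        Real.cos (2 * π * k / L) ^ 2)
      = ‖1 - ee T (ν : ZMod T) * ((ee L (k : ZMod L) + ee L (-(k : ZMod L))) / 2)‖ ^ 2 := by
    intro ν hν k hk
    rw [norm_factor_aux T L hT hL,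
      ZMod.val_natCast_of_lt (Finset.mem_range.1 hν),
      ZMod.val_natCast_of_lt (Finset.mem_range.1 hk)]
  -- normalization constant
  have hc0 : ‖(1 / (Real.sqrt (L * T) : ℂ))‖ ^ 2 = ((L : ℝ) * T)⁻¹ := by
    rw [norm_div, norm_one, Complex.norm_real, Real.norm_eq_abs,
      _root_.abs_of_nonneg (Real.sqrt_nonneg _)]
    rw [div_pow, one_pow, Real.sq_sqrt (by positivity)]
    rw [one_div]
  -- put the RHS together
  rw [hLHS]
  have hterm : ∀ ν ∈ Finset.range T, ∀ k ∈ Finset.range L,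
      ‖(1 / (Real.sqrt (L * T) : ℂ)) *
          ∑ t ∈ Finset.range T, ∑ j ∈ Finset.range L,
            Complex.exp (2 * π * Complex.I * k * j / L + 2 * π * Complex.I * ν * t / T) *
              (h ((t : ZMod T), (j : ZMod L)) : ℂ)‖ ^ 2 *
        (1 - 2 * Real.cos (2 * π * ν / T) * Real.cos (2 * π * k / L) +
          Real.cos (2 * π * k / L) ^ 2)
      = ((L : ℝ) * T)⁻¹ * ‖G ((ν : ZMod T), (k : ZMod L))‖ ^ 2 := by
    intro ν hν k hk
    rw [hinner ν hν k hk, hgamma ν hν k hk, norm_mul, mul_pow, hc0,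
      hshift ((ν : ZMod T), (k : ZMod L)), norm_mul, mul_pow]
    ring
  rw [Finset.sum_congr rfl fun ν hν => Finset.sum_congr rfl fun k hk => hterm ν hν k hk]
  have hfold : ∑ ν ∈ Finset.range T, ∑ k ∈ Finset.range L,
      ((L : ℝ) * T)⁻¹ * ‖G ((ν : ZMod T), (k : ZMod L))‖ ^ 2
      = ((L : ℝ) * T)⁻¹ * ∑ w : ZMod T × ZMod L, ‖G w‖ ^ 2 := by
    rw [sum_range_zmod T (fun x => ∑ k ∈ Finset.range L,
      ((L : ℝ) * T)⁻¹ * ‖G (x, (k : ZMod L))‖ ^ 2)]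
    rw [Finset.sum_congr rfl fun x _ =>
      sum_range_zmod L (fun y => ((L : ℝ) * T)⁻¹ * ‖G (x, y)‖ ^ 2)]
    simp_rw [← Finset.mul_sum]
    congr 1
    exact (Fintype.sum_prod_type (fun w : ZMod T × ZMod L => ‖G w‖ ^ 2)).symm
  rw [hfold, hGsum]
  have hne : ((L : ℝ) * T) ≠ 0 := by positivity
  field_simp
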